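/- arXiv:2210.04166 — 3 statements merged into one kernel-verified Lean document; each statement's English description precedes it below -/
import Mathlib

section
/- If (x₁,y₁),...,(x_{n+1},y_{n+1}) are i.i.d. (or exchangeable) random pairs, and s_i = s(x_i, y_i) are their conformity scores, then for τ* defined as the ⌈(1-α)(n+1)⌉-th smallest value among s₁,...,s_n, the probability that s_{n+1} ≤ τ* is at least 1 - α. -/
open MeasureTheory ENNReal

/-- The `k`-th smallest value (1-indexed) among the entries of `v`. -/
noncomputable def kthSmallest {n : ℕ} (v : Fin n → ℝ) (k : ℕ) : ℝ :=
  (((List.ofFn v).insertionSort (· ≤ ·)).getD (k - 1) 0)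

lemma sorted_getD_iff {S : List ℝ} (hS : S.Pairwise (· ≤ ·)) {k : ℕ} (hk1 : 1 ≤ k)
    (hk2 : k ≤ S.length) (p : ℝ → Bool)
    (hp : ∀ a b : ℝ, a ≤ b → p b → p a) :
    p (S.getD (k-1) 0) ↔ k ≤ S.countP p := by
  have hlt : k - 1 < S.length := by omega
  rw [List.getD_eq_getElem S 0 hlt]
  constructor
  · intro h
    have htake : (S.take k).countP p = (S.take k).length := by
      rw [List.countP_eq_length]
      intro a ha
      obtain ⟨i, hi, rfl⟩ := List.mem_iff_getElem.1 ha
      have hlen : i < k := by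
        have := hi; simp [List.length_take] at this; omega
      rw [List.getElem_take]
      have : S[i] ≤ S[k-1] := by
        have := hS.rel_get_of_le (a := ⟨i, by omega⟩) (b := ⟨k-1, hlt⟩) (by simp; omega)
        simpa using this
      exact hp _ _ this h
    have hle : (S.take k).countP p ≤ S.countP p :=
      (List.take_sublist k S).countP_le (p := p)
    rw [htake, List.length_take] at hle
    omega
  · intro h
    by_contra hnp
    have hsplit : S.countP p = (S.take (k-1)).countP p + (S.drop (k-1)).countP p := by
      conv_lhs => rw [← List.take_append_drop (k-1) S]
      rw [List.countP_append]
    have hdrop : (S.drop (k-1)).countP p = 0 := by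
      rw [List.countP_eq_zero]
      intro a ha
      obtain ⟨i, hi, rfl⟩ := List.mem_iff_getElem.1 ha
      have hlen2 : k - 1 + i < S.length := by
        have := hi; simp [List.length_drop] at this; omega
      have heq : (List.drop (k-1) S)[i] = S[k-1+i]'hlen2 := by
        rw [List.getElem_drop]
      rw [heq]
      intro hpa
      have hge : S[k-1] ≤ S[k-1+i]'hlen2 := by
        have := hS.rel_get_of_le (a := ⟨k-1, hlt⟩) (b := ⟨k-1+i, hlen2⟩) (by simp)
        simpa using this
      exact hnp (by simpa using hp _ _ hge hpa)
    have htakelen : (S.take (k-1)).countP p ≤ k - 1 := by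
      have := (S.take (k-1)).countP_le_length (p := p)
      rw [List.length_take] at this; omega
    omega

lemma countP_ofFn {m : ℕ} (v : Fin m → ℝ) (p : ℝ → Bool) :
    (List.ofFn v).countP p = (Finset.univ.filter (fun i => p (v i))).card := by
  rw [List.ofFn_eq_map, List.countP_map, Finset.card_filter]
  simp [Finset.sum, Fin.univ_def]
  induction (List.finRange m) with
  | nil => simp
  | cons a l ih =>
      rw [List.countP_cons]
      simp only [List.map_cons, List.sum_cons, Function.comp]
      by_cases h : p (v a) <;> simp [h, ih] <;> omega

lemma kthSmallest_pred_iff {m : ℕ} (v : Fin m → ℝ) {k : ℕ} (hk1 : 1 ≤ k) (hk2 : k ≤ m)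
    (p : ℝ → Bool) (hp : ∀ a b : ℝ, a ≤ b → p b → p a) :
    p (kthSmallest v k) ↔ k ≤ (Finset.univ.filter (fun i => p (v i))).card := by
  have hperm := List.perm_insertionSort (· ≤ ·) (List.ofFn v)
  have hlen : ((List.ofFn v).insertionSort (· ≤ ·)).length = m := by
    rw [List.length_insertionSort, List.length_ofFn]
  rw [kthSmallest, sorted_getD_iff (List.pairwise_insertionSort _ _) hk1 (by omega) p hp,
    hperm.countP_eq, countP_ofFn]

lemma kthSmallest_le_iff {m : ℕ} (v : Fin m → ℝ) {k : ℕ} (hk1 : 1 ≤ k) (hk2 : k ≤ m) (t : ℝ) :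
    kthSmallest v k ≤ t ↔ k ≤ (Finset.univ.filter (fun i => v i ≤ t)).card := by
  have := kthSmallest_pred_iff v hk1 hk2 (fun x => decide (x ≤ t))
    (fun a b hab hb => by simp_all; linarith)
  simpa using this

lemma kthSmallest_lt_iff {m : ℕ} (v : Fin m → ℝ) {k : ℕ} (hk1 : 1 ≤ k) (hk2 : k ≤ m) (t : ℝ) :
    kthSmallest v k < t ↔ k ≤ (Finset.univ.filter (fun i => v i < t)).card := by
  have := kthSmallest_pred_iff v hk1 hk2 (fun x => decide (x < t))
    (fun a b hab hb => by simp_all; linarith)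
  simpa using this

lemma rank_count {m : ℕ} (w : Fin m → ℝ) {k : ℕ} (hk1 : 1 ≤ k) (hk2 : k ≤ m) :
    k ≤ (Finset.univ.filter
      (fun j => (Finset.univ.filter (fun i => w i < w j)).card < k)).card := by
  set t := kthSmallest w k with ht
  have hA : k ≤ (Finset.univ.filter (fun j => w j ≤ t)).card :=
    (kthSmallest_le_iff w hk1 hk2 t).1 le_rfl
  refine le_trans hA (Finset.card_le_card ?_)
  intro j hj
  simp only [Finset.mem_filter, Finset.mem_univ, true_and] at hj ⊢
  have hsub : (Finset.univ.filter (fun i => w i < w j)) ⊆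
      (Finset.univ.filter (fun i => w i < t)) := by
    intro i hi
    simp only [Finset.mem_filter, Finset.mem_univ, true_and] at hi ⊢
    exact lt_of_lt_of_le hi hj
  have hlt : (Finset.univ.filter (fun i => w i < t)).card < k := by
    by_contra h
    exact absurd ((kthSmallest_lt_iff w hk1 hk2 t).2 (by omega)) (lt_irrefl t)
  exact lt_of_le_of_lt (Finset.card_le_card hsub) hlt

lemma measurable_kthSmallest {m k : ℕ} (hk1 : 1 ≤ k) (hk2 : k ≤ m) :
    Measurable (fun v : Fin m → ℝ => kthSmallest v k) := by
  apply measurable_of_Iic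
  intro t
  have : (fun v : Fin m → ℝ => kthSmallest v k) ⁻¹' Set.Iic t =
      ⋃ (T : Finset (Fin m)), {v : Fin m → ℝ | T.card = k ∧ ∀ i ∈ T, v i ≤ t} := by
    ext v
    simp only [Set.mem_preimage, Set.mem_Iic, Set.mem_iUnion, Set.mem_setOf_eq]
    rw [kthSmallest_le_iff v hk1 hk2 t]
    constructor
    · intro h
      obtain ⟨T, hTsub, hTcard⟩ := Finset.exists_subset_card_eq h
      exact ⟨T, hTcard, fun i hi => by
        have := hTsub hi; simp only [Finset.mem_filter] at this; exact this.2⟩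
    · rintro ⟨T, hTcard, hT⟩
      calc k = T.card := hTcard.symm
        _ ≤ _ := Finset.card_le_card (fun i hi => by
            simp only [Finset.mem_filter, Finset.mem_univ, true_and]; exact hT i hi)
  rw [this]
  apply MeasurableSet.iUnion
  intro T
  by_cases hT : T.card = k
  · have : {v : Fin m → ℝ | T.card = k ∧ ∀ i ∈ T, v i ≤ t} =
        ⋂ i ∈ T, {v : Fin m → ℝ | v i ≤ t} := by
      ext v; simp [hT]
    rw [this]
    exact MeasurableSet.biInter T.countable_toSet (fun i _ =>
      measurableSet_le (measurable_pi_apply i) measurable_const)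
  · have : {v : Fin m → ℝ | T.card = k ∧ ∀ i ∈ T, v i ≤ t} = ∅ := by
      ext v; simp [hT]
    rw [this]; exact MeasurableSet.empty

/-- conformal coverage lower bound. If `(x_i, y_i)`, `i = 1, …, n+1` are
exchangeable and `s_i = s(x_i, y_i)` are their conformity scores, then for `τ*` the
`⌈(1-α)(n+1)⌉`-th smallest value among `s_1, …, s_n`, one has `P(s_{n+1} ≤ τ*) ≥ 1 - α`. -/
theorem conformal_coverage_lower_bound {Ω : Type*} [MeasurableSpace Ω]
    (ℙ : Measure Ω) [IsProbabilityMeasure ℙ]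
    (n : ℕ) (α : ℝ) (hα : α ∈ Set.Ioo (0 : ℝ) 1)
    (s : Fin (n + 1) → Ω → ℝ) (hmeas : ∀ i, Measurable (s i))
    (hexch : ∀ σ : Equiv.Perm (Fin (n + 1)),
      Measure.map (fun ω => fun i => s i ω) ℙ = Measure.map (fun ω => fun i => s (σ i) ω) ℙ)
    (hn : (1 - α) * (n + 1) ≤ n) :
    ENNReal.ofReal (1 - α) ≤
      ℙ {ω | s (Fin.last n) ω ≤
        kthSmallest (fun i : Fin n => s i.castSucc ω) (Nat.ceil ((1 - α) * (n + 1)))} := by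
  classical
  obtain ⟨hα0, hα1⟩ := hα
  set k : ℕ := Nat.ceil ((1 - α) * (n + 1)) with hkdef
  have hpos : (0:ℝ) < (1 - α) * (n + 1) := by
    apply _root_.mul_pos (by linarith) (by positivity)
  have hk1 : 1 ≤ k := Nat.one_le_ceil_iff.2 hpos
  have hk2 : k ≤ n := Nat.ceil_le.2 hn
  set f : Ω → (Fin (n+1) → ℝ) := fun ω i => s i ω with hfdef
  have hfm : Measurable f := measurable_pi_lambda _ (fun i => hmeas i)
  set μ := Measure.map f ℙ with hμdef
  set B : Set (Fin (n+1) → ℝ) :=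
    {w | w (Fin.last n) ≤ kthSmallest (fun i : Fin n => w i.castSucc) k} with hBdef
  have hmB : MeasurableSet B := by
    apply measurableSet_le (measurable_pi_apply _)
    exact (measurable_kthSmallest hk1 hk2).comp
      (measurable_pi_lambda _ fun i => measurable_pi_apply _)
  have hμB : ℙ (f ⁻¹' B) = μ B := (Measure.map_apply hfm hmB).symm
  have hmcomp : ∀ σ : Equiv.Perm (Fin (n+1)),
      Measurable (fun w : Fin (n+1) → ℝ => w ∘ σ) :=
    fun σ => measurable_pi_lambda _ fun i => measurable_pi_apply _
  have hinv : ∀ σ : Equiv.Perm (Fin (n+1)),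
      Measure.map (fun w : Fin (n+1) → ℝ => w ∘ σ) μ = μ := by
    intro σ
    rw [hμdef, Measure.map_map (hmcomp σ) hfm]
    have h1 : ((fun w : Fin (n+1) → ℝ => w ∘ σ) ∘ f) = fun ω i => s (σ i) ω := rfl
    rw [h1, ← hexch σ]
  set Bj : Fin (n+1) → Set (Fin (n+1) → ℝ) :=
    fun j => (fun w => w ∘ (Equiv.swap j (Fin.last n))) ⁻¹' B with hBjdef
  have hmBj : ∀ j, MeasurableSet (Bj j) := fun j => (hmcomp _) hmB
  have hμBj : ∀ j, μ (Bj j) = μ B := by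
    intro j
    rw [← Measure.map_apply (hmcomp _) hmB, hinv]
  -- pointwise counting
  have hcount : ∀ w : Fin (n+1) → ℝ,
      k ≤ (Finset.univ.filter (fun j => w ∈ Bj j)).card := by
    intro w
    refine le_trans (rank_count w hk1 (by omega)) (Finset.card_le_card ?_)
    intro j hj
    simp only [Finset.mem_filter, Finset.mem_univ, true_and] at hj ⊢
    -- show w ∈ Bj j
    show (w ∘ (Equiv.swap j (Fin.last n))) ∈ B
    simp only [hBdef, Set.mem_setOf_eq, Function.comp_apply, Equiv.swap_apply_right]
    by_contra hnot
    push_neg at hnot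
    have hlt := (kthSmallest_lt_iff
      (fun i : Fin n => w ((Equiv.swap j (Fin.last n)) i.castSucc)) hk1 hk2 (w j)).1 hnot
    have hinj : Function.Injective
        (fun i : Fin n => (Equiv.swap j (Fin.last n)) i.castSucc) :=
      (Equiv.injective _).comp (Fin.castSucc_injective n)
    have hcard : (Finset.univ.filter
        (fun i : Fin n => w ((Equiv.swap j (Fin.last n)) i.castSucc) < w j)).card
        ≤ (Finset.univ.filter (fun i : Fin (n+1) => w i < w j)).card := by
      apply Finset.card_le_card_of_injOn
        (fun i => (Equiv.swap j (Fin.last n)) i.castSucc)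
      · intro i hi
        simp only [Finset.mem_coe, Finset.mem_filter, Finset.mem_univ, true_and] at hi ⊢
        exact hi
      · exact hinj.injOn
    omega
  -- sum inequality
  have hprob : IsProbabilityMeasure μ := Measure.isProbabilityMeasure_map hfm.aemeasurable
  have hsum : (k : ℝ≥0∞) ≤ ∑ j : Fin (n+1), μ (Bj j) := by
    have hlin : ∀ j, μ (Bj j) = ∫⁻ w, (Bj j).indicator 1 w ∂μ :=
      fun j => (lintegral_indicator_one (hmBj j)).symm
    calc (k : ℝ≥0∞) = ∫⁻ _, (k : ℝ≥0∞) ∂μ := by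
          rw [lintegral_const, measure_univ, mul_one]
      _ ≤ ∫⁻ w, ∑ j : Fin (n+1), (Bj j).indicator 1 w ∂μ := by
          refine lintegral_mono fun w => ?_
          show (k : ℝ≥0∞) ≤ ∑ j : Fin (n+1), (Bj j).indicator 1 w
          have h1 : (k : ℝ≥0∞) ≤ ((Finset.univ.filter (fun j => w ∈ Bj j)).card : ℝ≥0∞) := by
            exact_mod_cast hcount w
          refine le_trans h1 ?_
          calc ((Finset.univ.filter (fun j => w ∈ Bj j)).card : ℝ≥0∞)
              = ∑ j ∈ Finset.univ.filter (fun j => w ∈ Bj j), (1 : ℝ≥0∞) := by simp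
            _ = ∑ j ∈ Finset.univ.filter (fun j => w ∈ Bj j), (Bj j).indicator 1 w := by
                refine Finset.sum_congr rfl (fun j hj => ?_)
                simp only [Finset.mem_filter] at hj
                rw [Set.indicator_of_mem hj.2]
                rfl
            _ ≤ ∑ j : Fin (n+1), (Bj j).indicator 1 w :=
                Finset.sum_le_sum_of_subset (Finset.filter_subset _ _)
      _ = ∑ j : Fin (n+1), μ (Bj j) := by
          rw [lintegral_finset_sum]
          · exact Finset.sum_congr rfl (fun j _ => (hlin j).symm)
          · exact fun j _ => measurable_const.indicator (hmBj j)
  have hsum2 : (k : ℝ≥0∞) ≤ (n + 1 : ℝ≥0∞) * μ B := by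
    refine le_trans hsum ?_
    rw [Finset.sum_congr rfl (fun j _ => hμBj j), Finset.sum_const, Finset.card_univ,
      Fintype.card_fin, nsmul_eq_mul]
    push_cast
    rfl
  -- conclude
  have hfinal : ENNReal.ofReal (1 - α) ≤ μ B := by
    have hof : ENNReal.ofReal ((n:ℝ) + 1) = ((n : ℝ≥0∞) + 1) := by
      rw [ENNReal.ofReal_add (by positivity) (by norm_num), ENNReal.ofReal_natCast,
        ENNReal.ofReal_one]
    have h1 : ENNReal.ofReal (1 - α) * ((n : ℝ≥0∞) + 1) ≤ (k : ℝ≥0∞) := by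
      have h := ENNReal.ofReal_le_ofReal (Nat.le_ceil ((1 - α) * ((n:ℝ) + 1)))
      rw [ENNReal.ofReal_mul (by linarith), hof, ENNReal.ofReal_natCast] at h
      exact h
    have h2 : ((n : ℝ≥0∞) + 1) * ENNReal.ofReal (1 - α) ≤ ((n : ℝ≥0∞) + 1) * μ B := by
      rw [mul_comm]
      exact le_trans h1 hsum2
    refine (ENNReal.mul_le_mul_iff_right ?_ ?_).1 h2
    · intro hc
      rw [add_eq_zero] at hc
      exact one_ne_zero hc.2
    · exact ENNReal.add_ne_top.2 ⟨ENNReal.natCast_ne_top n, ENNReal.one_ne_top⟩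
  calc ENNReal.ofReal (1 - α) ≤ μ B := hfinal
    _ = ℙ (f ⁻¹' B) := hμB.symm
    _ = _ := rfl
end

section
/- If additionally the scores s₁,...,s_{n+1} are almost surely distinct, then the coverage probability P(s_{n+1} ≤ τ*) is at most 1 - α + 1/(n+1). -/
open MeasureTheory

lemma countP_ofFn_eq {n : ℕ} (f : Fin n → ℝ) (p : ℝ → Prop) [DecidablePred p] :
    (List.ofFn f).countP (fun x => decide (p x)) = (Finset.univ.filter (fun i => p (f i))).card := by
  rw [List.ofFn_eq_map, List.countP_map, List.countP_eq_length_filter, Fin.univ_def]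
  simp only [Finset.filter, Finset.card, Multiset.filter_coe, Multiset.coe_card]
  rfl

lemma det_iff {n : ℕ} (v : Fin (n+1) → ℝ) (hv : ∀ i j : Fin (n+1), i ≠ j → v i ≠ v j)
    (k : ℕ) (hk1 : 1 ≤ k) (hkn : k ≤ n) :
    (v (Fin.last n) ≤ kthSmallest (fun i : Fin n => v i.castSucc) k ↔
      (Finset.univ.filter (fun i => v i ≤ v (Fin.last n))).card ≤ k) := by
  set c := v (Fin.last n) with hc
  set f : Fin n → ℝ := fun i => v i.castSucc with hf
  set l := (List.ofFn f).insertionSort (· ≤ ·) with hl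
  have hperm : l.Perm (List.ofFn f) := List.perm_insertionSort _ _
  have hlen : l.length = n := hperm.length_eq.trans List.length_ofFn
  have hsort : l.Pairwise (· ≤ ·) := List.pairwise_insertionSort _ _
  have hcl : c ∉ l := by
    intro h
    obtain ⟨i, hi⟩ := (List.mem_ofFn (f := f) (a := c)).1 (hperm.mem_iff.1 h)
    exact hv i.castSucc (Fin.last n) (Fin.castSucc_lt_last i).ne hi
  set m := l.countP (fun x => decide (x < c)) with hm
  -- rank = m + 1
  have hrank : (Finset.univ.filter (fun i => v i ≤ c)).card = m + 1 := by
    rw [← countP_ofFn_eq v (fun x => x ≤ c)]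
    rw [List.ofFn_succ' v, List.concat_eq_append, List.countP_append]
    have h1 : (List.ofFn fun i : Fin n => v i.castSucc).countP (fun x => decide (x ≤ c))
        = m := by
      rw [hm, hperm.countP_eq]
      apply List.countP_congr
      intro x hx
      obtain ⟨i, hi⟩ := (List.mem_ofFn (f := f) (a := x)).1 hx
      have hne : x ≠ c := hi ▸ hv i.castSucc (Fin.last n) (Fin.castSucc_lt_last i).ne
      simp [lt_iff_le_and_ne, hne]
    rw [h1]
    simp [hc]
  have hidx : k - 1 < l.length := by omega
  have hgetD : l.getD (k-1) 0 = l.get ⟨k-1, hidx⟩ := List.getD_eq_getElem l 0 hidx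
  -- index-count version of m
  have hmidx : m = (Finset.univ.filter (fun j : Fin l.length => l.get j < c)).card := by
    conv_lhs => rw [hm, ← List.ofFn_get l]
    exact countP_ofFn_eq l.get (fun x => x < c)
  have key : c ≤ l.get ⟨k-1, hidx⟩ ↔ m ≤ k - 1 := by
    constructor
    · intro hle
      by_contra hgt
      push_neg at hgt
      have hkm : k ≤ m := by omega
      have hnotlt : ¬ l.get ⟨k-1, hidx⟩ < c := not_lt.2 hle
      have hsub : (Finset.univ.filter (fun j : Fin l.length => l.get j < c)) ⊆
          Finset.univ.filter (fun j : Fin l.length => (j : ℕ) < k - 1) := by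
        intro j hj
        simp only [Finset.mem_filter, Finset.mem_univ, true_and] at hj ⊢
        by_contra hge
        push_neg at hge
        exact hnotlt (lt_of_le_of_lt (hsort.rel_get_of_le (Fin.le_def.2 hge)) hj)
      have hcard := Finset.card_le_card hsub
      have hbound : (Finset.univ.filter (fun j : Fin l.length => (j : ℕ) < k - 1)).card ≤ k - 1 := by
        calc (Finset.univ.filter (fun j : Fin l.length => (j : ℕ) < k - 1)).card
            ≤ (Finset.range (k-1)).card := by
              apply Finset.card_le_card_of_injOn (fun j : Fin l.length => (j : ℕ))
              · intro j hj
                simp at hj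
                exact Finset.mem_range.2 hj
              · intro a _ b _ h
                exact Fin.val_injective h
          _ = k - 1 := Finset.card_range _
      omega
    · intro hle
      by_contra hlt
      push_neg at hlt
      have hall : ∀ x ∈ l.take k, x < c := by
        intro x hx
        obtain ⟨j, hj, hxe⟩ := List.mem_take_iff_getElem.1 hx
        have hjk : j < k := lt_of_lt_of_le hj (min_le_left _ _)
        have hjl : j < l.length := by omega
        have : l.get ⟨j, hjl⟩ ≤ l.get ⟨k-1, hidx⟩ :=
          hsort.rel_get_of_le (Fin.le_def.2 (by simp only []; omega))
        rw [← hxe] at *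
        exact lt_of_le_of_lt this hlt
      have htk : (l.take k).countP (fun x => decide (x < c)) = (l.take k).length :=
        List.countP_eq_length.2 (fun a ha => decide_eq_true (hall a ha))
      have hlenk : (l.take k).length = k := by rw [List.length_take]; omega
      have : k ≤ m := by
        rw [hm]
        calc k = (l.take k).countP (fun x => decide (x < c)) := by rw [htk, hlenk]
        _ ≤ l.countP (fun x => decide (x < c)) := by
            conv_rhs => rw [← List.take_append_drop k l]
            rw [List.countP_append]; omega
      omega
  rw [kthSmallest, ← hl, hgetD, hrank, key]
  omega

open MeasureTheory ENNReal

lemma rank_mono {Ω : Type*} {n : ℕ} (s : Fin n → Ω → ℝ) (ω : Ω) (j j' : Fin n)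
    (h : s j ω < s j' ω) :
    (Finset.univ.filter (fun i => s i ω ≤ s j ω)).card <
      (Finset.univ.filter (fun i => s i ω ≤ s j' ω)).card := by
  apply Finset.card_lt_card
  have hsub : (Finset.univ.filter (fun i => s i ω ≤ s j ω)) ⊆
      (Finset.univ.filter (fun i => s i ω ≤ s j' ω)) := by
    intro i hi
    simp only [Finset.mem_filter, Finset.mem_univ, true_and] at hi ⊢
    exact hi.trans h.le
  refine (Finset.ssubset_iff_of_subset hsub).2
    ⟨j', Finset.mem_filter.2 ⟨Finset.mem_univ _, le_refl _⟩, fun hj => ?_⟩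
  exact absurd (Finset.mem_filter.1 hj).2 (not_le.2 h)


/-- conformal coverage upper bound. In the setting of the coverage lower bound,
if additionally the scores `s_1, …, s_{n+1}` are almost surely distinct, then
`P(s_{n+1} ≤ τ*) ≤ 1 - α + 1/(n+1)`. -/
theorem conformal_coverage_upper_bound {Ω : Type*} [MeasurableSpace Ω]
    (ℙ : Measure Ω) [IsProbabilityMeasure ℙ]
    (n : ℕ) (α : ℝ) (hα : α ∈ Set.Ioo (0 : ℝ) 1)
    (s : Fin (n + 1) → Ω → ℝ) (hmeas : ∀ i, Measurable (s i))
    (hexch : ∀ σ : Equiv.Perm (Fin (n + 1)),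
      Measure.map (fun ω => fun i => s i ω) ℙ = Measure.map (fun ω => fun i => s (σ i) ω) ℙ)
    (hn : (1 - α) * (n + 1) ≤ n)
    (hdistinct : ∀ᵐ ω ∂ℙ, ∀ i j : Fin (n + 1), i ≠ j → s i ω ≠ s j ω) :
    ℙ {ω | s (Fin.last n) ω ≤
        kthSmallest (fun i : Fin n => s i.castSucc ω) (Nat.ceil ((1 - α) * (n + 1)))}
      ≤ ENNReal.ofReal (1 - α + 1 / (n + 1)) := by
  obtain ⟨hα0, hα1⟩ := hα
  set k := Nat.ceil ((1 - α) * (n + 1)) with hk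
  have hnp : (0:ℝ) < (n:ℝ) + 1 := by positivity
  have hx0 : (0:ℝ) < (1 - α) * (n + 1) := mul_pos (by linarith) hnp
  have hk1 : 1 ≤ k := Nat.one_le_ceil_iff.2 hx0
  have hkn : k ≤ n := Nat.ceil_le.2 hn
  set R : Fin (n+1) → Ω → ℕ :=
    fun j ω => (Finset.univ.filter (fun i => s i ω ≤ s j ω)).card with hR
  have hRmeas : ∀ j, Measurable (R j) := by
    intro j
    simp only [hR, Finset.card_filter]
    exact Finset.measurable_sum _ fun i _ =>
      Measurable.ite (measurableSet_le (hmeas i) (hmeas j)) measurable_const measurable_const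
  set D := {ω | ∀ i j : Fin (n+1), i ≠ j → s i ω ≠ s j ω} with hDdef
  have hDm : MeasurableSet D := by
    have : D = ⋂ (i : Fin (n+1)) (j : Fin (n+1)), {ω | i ≠ j → s i ω ≠ s j ω} := by
      ext ω; simp [hDdef, Set.mem_iInter]
    rw [this]
    refine MeasurableSet.iInter fun i => MeasurableSet.iInter fun j => ?_
    by_cases h : i = j
    · subst h; simp
    · have : {ω | i ≠ j → s i ω ≠ s j ω} = {ω | s i ω = s j ω}ᶜ := by
        ext ω; simp [h]
      rw [this]
      exact (measurableSet_eq_fun (hmeas i) (hmeas j)).compl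
  have hDc : ℙ Dᶜ = 0 := by
    have := ae_iff.1 hdistinct
    convert this using 2
    rfl
  have hD1 : ℙ D = 1 := by
    have h := measure_add_measure_compl hDm (μ := ℙ)
    rw [hDc, add_zero] at h
    simpa using h
  have hinj : ∀ ω ∈ D, Function.Injective (fun j => R j ω) := by
    intro ω hω j j' h
    by_contra hne
    rcases lt_trichotomy (s j ω) (s j' ω) with hlt | heq | hgt
    · exact absurd h (rank_mono s ω j j' hlt).ne
    · exact hω j j' hne heq
    · exact absurd h.symm (rank_mono s ω j' j hgt).ne
  have hmem : ∀ (ω : Ω) (j : Fin (n+1)), R j ω ∈ Finset.Icc 1 (n+1) := by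
    intro ω j
    refine Finset.mem_Icc.2 ⟨?_, ?_⟩
    · exact Finset.card_pos.2 ⟨j, Finset.mem_filter.2 ⟨Finset.mem_univ _, le_refl _⟩⟩
    · calc (Finset.univ.filter (fun i => s i ω ≤ s j ω)).card
          ≤ (Finset.univ : Finset (Fin (n+1))).card := Finset.card_filter_le _ _
        _ = n + 1 := Finset.card_fin _
  have hsurj : ∀ ω ∈ D, ∀ r ∈ Finset.Icc 1 (n+1), ∃ j, R j ω = r := by
    intro ω hω r hr
    have himg : Finset.univ.image (fun j => R j ω) = Finset.Icc 1 (n+1) := by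
      apply Finset.eq_of_subset_of_card_le
      · intro x hx
        obtain ⟨j, _, hj⟩ := Finset.mem_image.1 hx
        exact hj ▸ hmem ω j
      · rw [Nat.card_Icc, Finset.card_image_of_injective _ (hinj ω hω), Finset.card_fin]
        omega
    rw [← himg] at hr
    obtain ⟨j, _, hj⟩ := Finset.mem_image.1 hr
    exact ⟨j, hj⟩
  -- exchangeability
  have hswap : ∀ (j : Fin (n+1)) (r : ℕ),
      ℙ {ω | R j ω = r} = ℙ {ω | R (Fin.last n) ω = r} := by
    intro j r
    set σ : Equiv.Perm (Fin (n+1)) := Equiv.swap j (Fin.last n) with hσ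
    set g : (Fin (n+1) → ℝ) → ℕ :=
      fun v => (Finset.univ.filter (fun i => v i ≤ v (Fin.last n))).card with hg
    have hgm : Measurable g := by
      simp only [hg, Finset.card_filter]
      exact Finset.measurable_sum _ fun i _ => Measurable.ite
        (measurableSet_le (measurable_pi_apply i) (measurable_pi_apply (Fin.last n)))
        measurable_const measurable_const
    have hA : MeasurableSet (g ⁻¹' {r}) := hgm (measurableSet_singleton r)
    have hf : Measurable (fun ω => fun i => s i ω) := measurable_pi_lambda _ hmeas
    have hf' : Measurable (fun ω => fun i => s (σ i) ω) :=
      measurable_pi_lambda _ (fun i => hmeas (σ i))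
    have h1 : ℙ ((fun ω => fun i => s i ω) ⁻¹' (g ⁻¹' {r}))
        = ℙ ((fun ω => fun i => s (σ i) ω) ⁻¹' (g ⁻¹' {r})) := by
      rw [← Measure.map_apply hf hA, ← Measure.map_apply hf' hA, hexch σ]
    have ecard : ∀ ω, (Finset.univ.filter (fun i => s (σ i) ω ≤ s j ω)).card
        = (Finset.univ.filter (fun i => s i ω ≤ s j ω)).card := by
      intro ω
      apply Finset.card_bij (fun i _ => σ i)
      · intro a ha
        simp only [Finset.mem_filter, Finset.mem_univ, true_and] at ha ⊢
        exact ha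
      · intro a _ b _ hab
        exact σ.injective hab
      · intro b hb
        refine ⟨σ.symm b, ?_, by simp⟩
        simp only [Finset.mem_filter, Finset.mem_univ, true_and] at hb ⊢
        simpa using hb
    have e1 : (fun ω => fun i => s i ω) ⁻¹' (g ⁻¹' {r}) = {ω | R (Fin.last n) ω = r} := rfl
    have e2 : (fun ω => fun i => s (σ i) ω) ⁻¹' (g ⁻¹' {r}) = {ω | R j ω = r} := by
      ext ω
      simp only [Set.mem_preimage, Set.mem_singleton_iff, hg, Set.mem_setOf_eq, hR]
      have hlast : σ (Fin.last n) = j := Equiv.swap_apply_right _ _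
      simp only [hlast]
      rw [ecard ω]
    rw [e1, e2] at h1
    exact h1.symm
  -- uniform value
  have hval : ∀ r ∈ Finset.Icc 1 (n+1),
      ℙ {ω | R (Fin.last n) ω = r} = ((n:ℝ≥0∞)+1)⁻¹ := by
    intro r hr
    have hdisj : ((Finset.univ : Finset (Fin (n+1))) : Set (Fin (n+1))).PairwiseDisjoint
        (fun j => {ω | R j ω = r} ∩ D) := by
      intro j _ j' _ hne
      refine Set.disjoint_left.2 fun ω hω hω' => hne ?_
      exact hinj ω hω.2 (hω.1.trans hω'.1.symm)
    have hBm : ∀ j ∈ (Finset.univ : Finset (Fin (n+1))),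
        MeasurableSet ({ω | R j ω = r} ∩ D) :=
      fun j _ => ((hRmeas j) (measurableSet_singleton r)).inter hDm
    have hunion : (⋃ j ∈ (Finset.univ : Finset (Fin (n+1))), ({ω | R j ω = r} ∩ D)) = D := by
      ext ω
      simp only [Set.mem_iUnion, Set.mem_inter_iff, Set.mem_setOf_eq, Finset.mem_univ,
        exists_true_left, exists_prop]
      constructor
      · rintro ⟨j, -, -, hω⟩; exact hω
      · intro hω
        obtain ⟨j, hj⟩ := hsurj ω hω r hr
        exact ⟨j, trivial, hj, hω⟩
    have hsum := measure_biUnion_finset hdisj hBm (μ := ℙ)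
    rw [hunion, hD1] at hsum
    have hterm : ∀ j ∈ (Finset.univ : Finset (Fin (n+1))),
        ℙ ({ω | R j ω = r} ∩ D) = ℙ {ω | R (Fin.last n) ω = r} := by
      intro j _
      rw [measure_inter_conull hDc, hswap j r]
    rw [Finset.sum_congr rfl hterm, Finset.sum_const, Finset.card_fin] at hsum
    have hne0 : ((n:ℝ≥0∞)+1) ≠ 0 := by simp
    have hnetop : ((n:ℝ≥0∞)+1) ≠ ⊤ := by simp
    have hmul : ((n:ℝ≥0∞)+1) * ℙ {ω | R (Fin.last n) ω = r} = 1 := by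
      rw [nsmul_eq_mul] at hsum
      push_cast at hsum
      exact hsum.symm
    calc ℙ {ω | R (Fin.last n) ω = r}
        = ((n:ℝ≥0∞)+1)⁻¹ * (((n:ℝ≥0∞)+1) * ℙ {ω | R (Fin.last n) ω = r}) := by
          rw [← mul_assoc, ENNReal.inv_mul_cancel hne0 hnetop, one_mul]
      _ = ((n:ℝ≥0∞)+1)⁻¹ := by rw [hmul, mul_one]
  -- main set identification
  set E := {ω | s (Fin.last n) ω ≤
      kthSmallest (fun i : Fin n => s i.castSucc ω) k} with hE
  have hED : E ∩ D = ⋃ r ∈ Finset.Icc 1 k, ({ω | R (Fin.last n) ω = r} ∩ D) := by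
    ext ω
    simp only [Set.mem_inter_iff, Set.mem_iUnion, Set.mem_setOf_eq, Finset.mem_Icc,
      exists_prop, hE]
    constructor
    · rintro ⟨hEω, hω⟩
      refine ⟨R (Fin.last n) ω, ⟨?_, ?_⟩, rfl, hω⟩
      · exact (Finset.mem_Icc.1 (hmem ω (Fin.last n))).1
      · exact (det_iff (fun i => s i ω) hω k hk1 hkn).1 hEω
    · rintro ⟨r, ⟨_, hrk⟩, hRr, hω⟩
      exact ⟨(det_iff (fun i => s i ω) hω k hk1 hkn).2 (le_trans (le_of_eq hRr) hrk), hω⟩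
  have hEle : ℙ E ≤ ℙ (E ∩ D) := by
    calc ℙ E = ℙ ((E ∩ D) ∪ (E ∩ Dᶜ)) := by rw [Set.inter_union_compl]
      _ ≤ ℙ (E ∩ D) + ℙ (E ∩ Dᶜ) := measure_union_le _ _
      _ ≤ ℙ (E ∩ D) + ℙ Dᶜ := add_le_add le_rfl (measure_mono Set.inter_subset_right)
      _ = ℙ (E ∩ D) := by rw [hDc, add_zero]
  have hdisj2 : ((Finset.Icc 1 k : Finset ℕ) : Set ℕ).PairwiseDisjoint
      (fun r => {ω | R (Fin.last n) ω = r} ∩ D) := by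
    intro r _ r' _ hne
    refine Set.disjoint_left.2 fun ω hω hω' => hne ?_
    exact hω.1.symm.trans hω'.1
  have hBm2 : ∀ r ∈ Finset.Icc 1 k, MeasurableSet ({ω | R (Fin.last n) ω = r} ∩ D) :=
    fun r _ => ((hRmeas _) (measurableSet_singleton r)).inter hDm
  have hcount : ℙ (E ∩ D) = (k : ℝ≥0∞) * ((n:ℝ≥0∞)+1)⁻¹ := by
    rw [hED, measure_biUnion_finset hdisj2 hBm2]
    have hterm : ∀ r ∈ Finset.Icc 1 k,
        ℙ ({ω | R (Fin.last n) ω = r} ∩ D) = ((n:ℝ≥0∞)+1)⁻¹ := by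
      intro r hr
      have hr' : r ∈ Finset.Icc 1 (n+1) := by
        simp only [Finset.mem_Icc] at hr ⊢
        omega
      rw [measure_inter_conull hDc, hval r hr']
    rw [Finset.sum_congr rfl hterm, Finset.sum_const, Nat.card_Icc]
    simp [nsmul_eq_mul]
  refine le_trans hEle ?_
  rw [hcount]
  have hcast : ENNReal.ofReal ((n:ℝ)+1) = (n:ℝ≥0∞)+1 := by
    rw [ENNReal.ofReal_add (by positivity) zero_le_one, ENNReal.ofReal_natCast,
      ENNReal.ofReal_one]
  have hlhs : (k : ℝ≥0∞) * ((n:ℝ≥0∞)+1)⁻¹ = ENNReal.ofReal ((k:ℝ) / ((n:ℝ)+1)) := by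
    rw [ENNReal.ofReal_div_of_pos hnp, hcast, ENNReal.ofReal_natCast, div_eq_mul_inv]
  rw [hlhs]
  apply ENNReal.ofReal_le_ofReal
  have hceil : (k:ℝ) < (1 - α) * (n + 1) + 1 := Nat.ceil_lt_add_one hx0.le
  rw [div_le_iff₀ hnp]
  have hexp : (1 - α + 1 / ((n:ℝ) + 1)) * ((n:ℝ) + 1) = (1 - α) * ((n:ℝ)+1) + 1 := by
    field_simp
  rw [hexp]
  linarith
end

section
/- In the binary toy model, the classifier f with weights w_inv > 0 and w_sp = 0 minimizes the misclassification probability P_{(x,y)∼P_p}[sign(w^T x) ≠ y] over all weight vectors w ∈ ℝ², simultaneously for every spurious correlation parameter p ∈ [0,1]. -/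
open MeasureTheory ProbabilityTheory
open scoped ENNReal

/-- Uniform probability measure on the interval `[a, b]`. -/
noncomputable def unifI (a b : ℝ) : Measure ℝ := (volume : Measure ℝ)[|Set.Icc a b]

/-- Law of the spurious feature given label `yv`: equals `yv` with probability `p`
and `-yv` with probability `1 - p`. -/
noncomputable def spur (p yv : ℝ) : Measure ℝ :=
  ENNReal.ofReal p • Measure.dirac yv + ENNReal.ofReal (1 - p) • Measure.dirac (-yv)

/-- The toy-model distribution `P_p` of `(x_inv, x_sp, y)`: `y` uniform on `{-1, 1}`;
given `y = 1`, `x_inv ~ U[γ, c]`; given `y = -1`, `x_inv ~ U[-c, -γ]`;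
`x_sp = y` with probability `p`, independent of `x_inv` given `y`. -/
noncomputable def toy (γ c p : ℝ) : Measure (ℝ × ℝ × ℝ) :=
  (1 / 2 : ℝ≥0∞) •
      Measure.map (fun z : ℝ × ℝ => (z.1, z.2, (1 : ℝ))) ((unifI γ c).prod (spur p 1))
    + (1 / 2 : ℝ≥0∞) •
      Measure.map (fun z : ℝ × ℝ => (z.1, z.2, (-1 : ℝ))) ((unifI (-c) (-γ)).prod (spur p (-1)))

/-- Misclassification probability of the linear classifier `x ↦ sign(w ⬝ x)` under `P_p`. -/
noncomputable def errProb (γ c p : ℝ) (w : ℝ × ℝ) : ℝ≥0∞ :=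
  toy γ c p {z | Real.sign (w.1 * z.1 + w.2 * z.2.1) ≠ z.2.2}

/-- Maximum softmax confidence of the logistic classifier with weights `w` at input `x`. -/
noncomputable def conf (w x : ℝ × ℝ) : ℝ :=
  max (1 / (1 + Real.exp (w.1 * x.1 + w.2 * x.2)))
      (Real.exp (w.1 * x.1 + w.2 * x.2) / (1 + Real.exp (w.1 * x.1 + w.2 * x.2)))

/-- Softmax probability the logistic classifier assigns to the true label of `z`. -/
noncomputable def fscore (w : ℝ × ℝ) (z : ℝ × ℝ × ℝ) : ℝ :=
  if z.2.2 = 1 then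
    Real.exp (w.1 * z.1 + w.2 * z.2.1) / (1 + Real.exp (w.1 * z.1 + w.2 * z.2.1))
  else 1 / (1 + Real.exp (w.1 * z.1 + w.2 * z.2.1))

/-- TPS miscoverage event at threshold `τ`: the true label is not in
`C^TPS(x, τ) = {ℓ : f_ℓ(x) ≥ 1 - τ}`. -/
def miscover (w : ℝ × ℝ) (τ : ℝ) : Set (ℝ × ℝ × ℝ) := {z | fscore w z < 1 - τ}

instance spur_finite (p yv : ℝ) : IsFiniteMeasure (spur p yv) := by
  constructor
  unfold spur
  rw [Measure.add_apply, Measure.smul_apply, Measure.smul_apply]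
  simp only [Measure.dirac_apply_of_mem (Set.mem_univ _), smul_eq_mul, mul_one]
  exact ENNReal.add_lt_top.mpr ⟨ENNReal.ofReal_lt_top, ENNReal.ofReal_lt_top⟩
lemma unifI_Iic_zero (γ c : ℝ) (hγ : 0 ≤ γ) : unifI γ c (Set.Iic 0) = 0 := by
  unfold unifI
  rw [ProbabilityTheory.cond_apply measurableSet_Icc]
  have h : Set.Icc γ c ∩ Set.Iic 0 ⊆ ({0} : Set ℝ) := by
    rintro x ⟨⟨h1, _⟩, h2⟩
    simp [le_antisymm h2 (hγ.trans h1)]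
  rw [measure_mono_null h (measure_singleton 0), mul_zero]

lemma unifI_Ici_zero (γ c : ℝ) (hγ : 0 ≤ γ) : unifI (-c) (-γ) (Set.Ici 0) = 0 := by
  unfold unifI
  rw [ProbabilityTheory.cond_apply measurableSet_Icc]
  have h : Set.Icc (-c) (-γ) ∩ Set.Ici 0 ⊆ ({0} : Set ℝ) := by
    rintro x ⟨⟨_, h1⟩, h2⟩
    have : x = 0 := le_antisymm (h1.trans (by linarith)) h2
    simp [this]
  rw [measure_mono_null h (measure_singleton 0), mul_zero]

/-- the classifier with `w_inv > 0` and `w_sp = 0` minimizes the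
misclassification probability over all weight vectors `w ∈ ℝ²`, simultaneously for
every spurious correlation parameter `p ∈ [0, 1]`. -/
theorem invariant_classifier_optimal (γ c : ℝ) (hγ : 0 ≤ γ) (hc : γ < c)
    (p : ℝ) (hp : p ∈ Set.Icc (0 : ℝ) 1)
    (winv : ℝ) (hwinv : 0 < winv) (w : ℝ × ℝ) :
    errProb γ c p (winv, 0) ≤ errProb γ c p w := by
  have hzero : errProb γ c p (winv, 0) = 0 := by
    unfold errProb toy
    have hA : MeasurableSet {z : ℝ × ℝ × ℝ | z.2.2 = 1 → z.1 ≤ 0} := by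
      have e : {z : ℝ × ℝ × ℝ | z.2.2 = 1 → z.1 ≤ 0}
          = {z : ℝ × ℝ × ℝ | z.2.2 = 1}ᶜ ∪ {z | z.1 ≤ 0} := by
        ext z; simp [imp_iff_not_or]
      rw [e]
      exact ((measurable_snd.snd (measurableSet_singleton 1)).compl).union
        (measurableSet_le measurable_fst measurable_const)
    have hB : MeasurableSet {z : ℝ × ℝ × ℝ | z.2.2 = -1 → 0 ≤ z.1} := by
      have e : {z : ℝ × ℝ × ℝ | z.2.2 = -1 → 0 ≤ z.1}
          = {z : ℝ × ℝ × ℝ | z.2.2 = -1}ᶜ ∪ {z | 0 ≤ z.1} := by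
        ext z; simp [imp_iff_not_or]
      rw [e]
      exact ((measurable_snd.snd (measurableSet_singleton (-1))).compl).union
        (measurableSet_le measurable_const measurable_fst)
    have hTmeas : MeasurableSet {z : ℝ × ℝ × ℝ | (z.2.2 = 1 → z.1 ≤ 0) ∧ (z.2.2 = -1 → 0 ≤ z.1)} :=
      hA.inter hB
    have hsub : {z : ℝ × ℝ × ℝ | Real.sign ((winv, (0:ℝ)).1 * z.1 + (winv, (0:ℝ)).2 * z.2.1) ≠ z.2.2}
        ⊆ {z : ℝ × ℝ × ℝ | (z.2.2 = 1 → z.1 ≤ 0) ∧ (z.2.2 = -1 → 0 ≤ z.1)} := by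
      rintro ⟨x1, x2, y⟩ hz
      simp only [Set.mem_setOf_eq] at hz ⊢
      constructor
      · intro h1
        by_contra hpos
        push_neg at hpos
        exact hz (by rw [Real.sign_of_pos (by nlinarith)]; exact h1.symm)
      · intro h1
        by_contra hneg
        push_neg at hneg
        exact hz (by rw [Real.sign_of_neg (by nlinarith)]; exact h1.symm)
    refine le_antisymm (le_trans (measure_mono hsub) ?_) (zero_le)
    rw [Measure.add_apply, Measure.smul_apply, Measure.smul_apply,
      Measure.map_apply (measurable_fst.prodMk (measurable_snd.prodMk measurable_const)) hTmeas,
      Measure.map_apply (measurable_fst.prodMk (measurable_snd.prodMk measurable_const)) hTmeas]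
    have e1 : (fun z : ℝ × ℝ => (z.1, z.2, (1:ℝ))) ⁻¹'
        {z : ℝ × ℝ × ℝ | (z.2.2 = 1 → z.1 ≤ 0) ∧ (z.2.2 = -1 → 0 ≤ z.1)}
        = Set.Iic 0 ×ˢ Set.univ := by
      ext ab; simp; norm_num
    have e2 : (fun z : ℝ × ℝ => (z.1, z.2, (-1:ℝ))) ⁻¹'
        {z : ℝ × ℝ × ℝ | (z.2.2 = 1 → z.1 ≤ 0) ∧ (z.2.2 = -1 → 0 ≤ z.1)}
        = Set.Ici 0 ×ˢ Set.univ := by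
      ext ab; simp; norm_num
    rw [e1, e2, Measure.prod_prod, Measure.prod_prod,
      unifI_Iic_zero γ c hγ, unifI_Ici_zero γ c hγ]
    simp
  rw [hzero]
  exact zero_le
end
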